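/- Let A = {(0,0),(1,0),(0,1),(2,0),(0,2),(3,0),(2,1),(1,2),(0,3)} ⊂ ℤ². Then for all integers t ≥ 2, |tA| = (9t² + 9t + 2)/2 = C(3t+2, 2), while |1A| = 9 ≠ C(5,2). -/

import Mathlib

open Pointwise

private def TT (n : ℕ) : Finset (ℤ × ℤ) :=
  (Finset.range (n+1)).biUnion fun k =>
    (Finset.range (k+1)).image fun i => (((i : ℕ) : ℤ), ((k : ℤ) - (i : ℕ)))

private lemma mem_TT {n : ℕ} {p : ℤ × ℤ} :
    p ∈ TT n ↔ 0 ≤ p.1 ∧ 0 ≤ p.2 ∧ p.1 + p.2 ≤ n := by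
  simp only [TT, Finset.mem_biUnion, Finset.mem_range, Finset.mem_image]
  constructor
  · rintro ⟨k, hk, i, hi, rfl⟩
    simp only
    omega
  · rintro ⟨h1, h2, h3⟩
    refine ⟨(p.1 + p.2).toNat, by omega, p.1.toNat, by omega, ?_⟩
    rw [Prod.ext_iff]
    constructor <;> simp <;> omega

private lemma card_TT (n : ℕ) : 2 * (TT n).card = (n+1) * (n+2) := by
  have h1 : (TT n).card = ∑ k ∈ Finset.range (n+1), (k+1) := by
    rw [TT, Finset.card_biUnion]
    · refine Finset.sum_congr rfl fun k hk => ?_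
      rw [Finset.card_image_of_injOn, Finset.card_range]
      intro i _ j _ hij
      simp only [Prod.mk.injEq] at hij
      exact_mod_cast hij.1
    · intro x _ y _ hxy
      rw [Function.onFun, Finset.disjoint_left]
      rintro p hp hq
      simp only [Finset.mem_image, Finset.mem_range] at hp hq
      obtain ⟨i, hi, rfl⟩ := hp
      obtain ⟨j, hj, hji⟩ := hq
      have e1 := congrArg Prod.fst hji
      have e2 := congrArg Prod.snd hji
      simp only at e1 e2
      apply hxy
      omega
  have h2 : ∑ k ∈ Finset.range (n+2), k = (∑ k ∈ Finset.range (n+1), (k+1)) + 0 :=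
    Finset.sum_range_succ' id (n+1)
  have h3 := Finset.sum_range_id_mul_two (n+2)
  have h4 : (n+2) * (n+2-1) = (n+1) * (n+2) := by
    rw [show n+2-1 = n+1 from rfl]; ring
  omega

private lemma TT_step (A : Finset (ℤ × ℤ))
    (hA : A = {(0,0), (1,0), (0,1), (2,0), (0,2), (3,0), (2,1), (1,2), (0,3)})
    (n : ℕ) (hn : 3 ≤ n) : TT n + A = TT (n+3) := by
  subst hA
  ext p
  obtain ⟨x, y⟩ := p
  simp only [Finset.mem_add]
  constructor
  · rintro ⟨a, ha, b, hb, hab⟩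
    rw [mem_TT] at ha
    rw [Prod.ext_iff] at hab
    simp only [Prod.fst_add, Prod.snd_add] at hab
    rw [mem_TT]
    fin_cases hb <;> simp_all <;> omega
  · intro hp
    rw [mem_TT] at hp
    obtain ⟨h1, h2, h3⟩ := hp
    simp only at h1 h2 h3
    by_cases hle : x + y ≤ n
    · exact ⟨(x, y), mem_TT.mpr ⟨h1, h2, hle⟩, (0,0), by decide, by simp⟩
    · push_neg at hle
      rcases lt_or_ge x 3 with hx | hx
      · interval_cases x
        · refine ⟨(0, y - 3), mem_TT.mpr ⟨by simp, by simp; omega, by simp; omega⟩,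
            (0, 3), by decide, ?_⟩
          rw [Prod.ext_iff]; constructor <;> simp
        · refine ⟨(0, y - 2), mem_TT.mpr ⟨by simp, by simp; omega, by simp; omega⟩,
            (1, 2), by decide, ?_⟩
          rw [Prod.ext_iff]; constructor <;> simp <;> omega
        · refine ⟨(0, y - 1), mem_TT.mpr ⟨by simp, by simp; omega, by simp; omega⟩,
            (2, 1), by decide, ?_⟩
          rw [Prod.ext_iff]; constructor <;> simp <;> omega
      · refine ⟨(x - 3, y), mem_TT.mpr ⟨by simp; omega, by simp; omega, by simp; omega⟩,
          (3, 0), by decide, ?_⟩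
        rw [Prod.ext_iff]; constructor <;> simp <;> omega

private lemma smul_eq_TT (A : Finset (ℤ × ℤ))
    (hA : A = {(0,0), (1,0), (0,1), (2,0), (0,2), (3,0), (2,1), (1,2), (0,3)})
    (t : ℕ) (ht : 2 ≤ t) : t • A = TT (3 * t) := by
  induction t, ht using Nat.le_induction with
  | base =>
    subst hA
    rw [two_nsmul]
    show _ = TT 6
    decide
  | succ t ht ih =>
    rw [succ_nsmul, ih, show 3 * (t + 1) = 3 * t + 3 by ring]
    exact TT_step A hA (3 * t) (by omega)

/-- For `A = {(0,0),(1,0),(0,1),(2,0),(0,2),(3,0),(2,1),(1,2),(0,3)} ⊂ ℤ²`,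
`|tA| = (9t² + 9t + 2)/2 = C(3t+2,2)` for all `t ≥ 2`, while `|1A| = 9 ≠ C(5,2)`. -/
theorem stmt_4 (A : Finset (ℤ × ℤ))
    (hA : A = {(0,0), (1,0), (0,1), (2,0), (0,2), (3,0), (2,1), (1,2), (0,3)}) :
    (∀ t : ℕ, 2 ≤ t →
      2 * (t • A).card = 9 * t ^ 2 + 9 * t + 2 ∧
      (t • A).card = Nat.choose (3 * t + 2) 2) ∧
    ((1 : ℕ) • A).card = 9 ∧ (9 : ℕ) ≠ Nat.choose 5 2 := by
  refine ⟨fun t ht => ?_, ?_, by decide⟩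
  · rw [smul_eq_TT A hA t ht]
    have h := card_TT (3 * t)
    constructor
    · rw [h]; ring
    · rw [Nat.choose_two_right, show 3 * t + 2 - 1 = 3 * t + 1 by omega,
        show (3 * t + 2) * (3 * t + 1) = (3 * t + 1) * (3 * t + 2) by ring]
      generalize hP : (3 * t + 1) * (3 * t + 2) = P at h ⊢
      omega
  · rw [one_nsmul, hA]; decide
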